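/- Let D(λ) = α² + 2iα(sin θ₊ + sin θ₋) - 4 sin θ₊ sin θ₋ - β², where 2cos θ_± = ω + 2 ± iλ, α = a + b/2, β = b/2, and (ω+2)² = 4 + a² with a > 0. Then D(0) = 0 and D'(0) = 0, i.e., λ = 0 is a zero of D of multiplicity at least 2. -/

import Mathlib

/-- The determinant D(λ) = α² + 2iα(sin θ₊ + sin θ₋) - 4 sin θ₊ sin θ₋ - β²,
with α = a + b/2, β = b/2 and the branches
sin θ_± = (i/2)((ω+2±iλ)² - 4)^{1/2} (so that sin θ_± = ia/2 at λ = 0). -/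
noncomputable def Ddet (ω a b : ℝ) (lam : ℂ) : ℂ :=
  (((a : ℂ) + b / 2)) ^ 2
    + 2 * Complex.I * ((a : ℂ) + b / 2) *
        ((1 / 2) * Complex.I * ((((ω : ℂ) + 2 + Complex.I * lam) ^ 2 - 4) ^ ((1 : ℂ) / 2))
          + (1 / 2) * Complex.I * ((((ω : ℂ) + 2 - Complex.I * lam) ^ 2 - 4) ^ ((1 : ℂ) / 2)))
    - 4 * ((1 / 2) * Complex.I * ((((ω : ℂ) + 2 + Complex.I * lam) ^ 2 - 4) ^ ((1 : ℂ) / 2)))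
        * ((1 / 2) * Complex.I * ((((ω : ℂ) + 2 - Complex.I * lam) ^ 2 - 4) ^ ((1 : ℂ) / 2)))
    - ((b : ℂ) / 2) ^ 2

/-- λ = 0 is a zero of the determinant D of multiplicity at least 2:
D(0) = 0 and D'(0) = 0. -/
theorem det_zero_order_two (a b ω : ℝ) (ha : 0 < a) (hω : 0 < ω)
    (hωa : (ω + 2) ^ 2 = 4 + a ^ 2) :
    Ddet ω a b 0 = 0 ∧ deriv (Ddet ω a b) 0 = 0 := by
  set w : ℂ := (ω : ℂ) + 2 with hw
  -- the base at λ = 0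
  have hbase : w ^ 2 - 4 = (((a ^ 2 : ℝ)) : ℂ) := by
    have : ((ω : ℂ) + 2) ^ 2 = 4 + (a : ℂ) ^ 2 := by
      exact_mod_cast congrArg (Complex.ofReal) hωa
    rw [hw, this]; push_cast; ring
  have hslit : w ^ 2 - 4 ∈ Complex.slitPlane := by
    rw [hbase]
    exact Complex.ofReal_mem_slitPlane.mpr (pow_pos ha 2)
  -- value of the square root at λ = 0
  have hv : (w ^ 2 - 4) ^ ((1 : ℂ) / 2) = (a : ℂ) := by
    rw [hbase]
    have h12 : ((1 : ℂ) / 2) = ((1 / 2 : ℝ) : ℂ) := by norm_num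
    rw [h12, ← Complex.ofReal_cpow (sq_nonneg a)]
    norm_cast
    rw [← Real.rpow_natCast a 2, ← Real.rpow_mul ha.le]
    norm_num
  -- derivatives of the inner functions
  have hin1 : HasDerivAt (fun lam : ℂ => (w + Complex.I * lam) ^ 2 - 4)
      (2 * w * Complex.I) 0 := by
    have h : HasDerivAt (fun lam : ℂ => w + Complex.I * lam) Complex.I 0 := by
      simpa using ((hasDerivAt_id (0:ℂ)).const_mul Complex.I).const_add w
    have := ((h.pow 2).sub_const 4)
    simpa using this
  have hin2 : HasDerivAt (fun lam : ℂ => (w - Complex.I * lam) ^ 2 - 4)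
      (-(2 * w * Complex.I)) 0 := by
    have h : HasDerivAt (fun lam : ℂ => w - Complex.I * lam) (-Complex.I) 0 := by
      simpa using ((hasDerivAt_id (0:ℂ)).const_mul Complex.I).const_sub w
    have := ((h.pow 2).sub_const 4)
    simpa [mul_comm, mul_left_comm] using this
  have h10 : (fun lam : ℂ => w + Complex.I * lam) 0 = w := by simp
  have hs : HasDerivAt (fun lam : ℂ => ((w + Complex.I * lam) ^ 2 - 4) ^ ((1 : ℂ) / 2))
      ((1 / 2) * (w ^ 2 - 4) ^ ((1 : ℂ) / 2 - 1) * (2 * w * Complex.I)) 0 := by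
    have := hin1.cpow_const (c := (1 : ℂ) / 2) (by simpa using hslit)
    simpa using this
  have ht : HasDerivAt (fun lam : ℂ => ((w - Complex.I * lam) ^ 2 - 4) ^ ((1 : ℂ) / 2))
      ((1 / 2) * (w ^ 2 - 4) ^ ((1 : ℂ) / 2 - 1) * (-(2 * w * Complex.I))) 0 := by
    have := hin2.cpow_const (c := (1 : ℂ) / 2) (by simpa using hslit)
    simpa using this
  set d : ℂ := (1 / 2) * (w ^ 2 - 4) ^ ((1 : ℂ) / 2 - 1) * (2 * w * Complex.I) with hd
  set K : ℂ := 2 * Complex.I * ((a : ℂ) + b / 2) with hK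
  set c : ℂ := (1 / 2) * Complex.I with hc
  -- D(0) = 0
  have hD0 : Ddet ω a b 0 = 0 := by
    simp only [Ddet, mul_zero, add_zero, sub_zero, ← hw, hv]
    ring_nf
    rw [Complex.I_sq]
    ring
  refine ⟨hD0, ?_⟩
  -- assemble derivative of Ddet at 0
  have hs' : HasDerivAt (fun lam : ℂ => c * ((w + Complex.I * lam) ^ 2 - 4) ^ ((1 : ℂ) / 2))
      (c * d) 0 := hs.const_mul c
  have ht' : HasDerivAt (fun lam : ℂ => c * ((w - Complex.I * lam) ^ 2 - 4) ^ ((1 : ℂ) / 2))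
      (c * -d) 0 := by
    have := ht.const_mul c
    have e : c * -d = c * (1 / 2 * (w ^ 2 - 4) ^ ((1 : ℂ) / 2 - 1) * -(2 * w * Complex.I)) := by
      rw [hd]; ring
    rw [e]; exact this
  have hsum : HasDerivAt (fun lam : ℂ =>
      K * (c * ((w + Complex.I * lam) ^ 2 - 4) ^ ((1 : ℂ) / 2)
        + c * ((w - Complex.I * lam) ^ 2 - 4) ^ ((1 : ℂ) / 2)))
      (K * (c * d + c * -d)) 0 := (hs'.add ht').const_mul K
  have hprod : HasDerivAt (fun lam : ℂ =>
      4 * (c * ((w + Complex.I * lam) ^ 2 - 4) ^ ((1 : ℂ) / 2))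
        * (c * ((w - Complex.I * lam) ^ 2 - 4) ^ ((1 : ℂ) / 2)))
      ((4 * (c * d)) * (c * (w ^ 2 - 4) ^ ((1 : ℂ) / 2))
        + (4 * (c * (w ^ 2 - 4) ^ ((1 : ℂ) / 2))) * (c * -d)) 0 := by
    have := (hs'.const_mul 4).mul ht'
    simp only [mul_zero, add_zero, sub_zero] at this
    exact this
  have hfull : HasDerivAt (Ddet ω a b)
      (K * (c * d + c * -d)
        - ((4 * (c * d)) * (c * (w ^ 2 - 4) ^ ((1 : ℂ) / 2))
          + (4 * (c * (w ^ 2 - 4) ^ ((1 : ℂ) / 2))) * (c * -d))) 0 := by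
    have h1 := ((hsum.const_add ((((a : ℂ) + b / 2)) ^ 2)).sub hprod).sub_const (((b : ℂ) / 2) ^ 2)
    have heq : (fun lam : ℂ => (((a : ℂ) + b / 2)) ^ 2
        + K * (c * ((w + Complex.I * lam) ^ 2 - 4) ^ ((1 : ℂ) / 2)
          + c * ((w - Complex.I * lam) ^ 2 - 4) ^ ((1 : ℂ) / 2))
        - 4 * (c * ((w + Complex.I * lam) ^ 2 - 4) ^ ((1 : ℂ) / 2))
          * (c * ((w - Complex.I * lam) ^ 2 - 4) ^ ((1 : ℂ) / 2))
        - ((b : ℂ) / 2) ^ 2) = Ddet ω a b := by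
      funext lam
      simp only [Ddet, hK, hc, ← hw]
      try ring
    rw [← heq]
    exact h1
  have hz : K * (c * d + c * -d)
        - ((4 * (c * d)) * (c * (w ^ 2 - 4) ^ ((1 : ℂ) / 2))
          + (4 * (c * (w ^ 2 - 4) ^ ((1 : ℂ) / 2))) * (c * -d)) = 0 := by ring
  rw [hz] at hfull
  simpa using hfull.deriv
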